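/- Let G be the (ω−1)-th power of a path on n vertices colored by assigning vertex vᵢ the color i mod (2ω−1). This is a proper (2ω−1)-coloring in which every vertex vᵢ with ω ≤ i ≤ n−ω+1 is frozen: no single-vertex recoloring step (changing the color of exactly one vertex while keeping the coloring proper with the same 2ω−1 colors) can change the color of vᵢ without first changing a neighbor's color; in fact, each such vᵢ sees all other 2ω−2 colors on its neighborhood. -/
import Mathlib


/-- In the (ω−1)-th power of a path colored periodically with 2ω−1 colors, the coloring
is proper and every vertex far enough from both ends is frozen: all other 2ω−2 colors
of the palette appear in its neighborhood. -/
theorem power_path_frozen_coloring {n ω : ℕ} (hω : 2 ≤ ω)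
    (G : SimpleGraph (Fin n))
    (hadj : ∀ i j : Fin n, G.Adj i j ↔
      i ≠ j ∧ (i : ℕ) ≤ (j : ℕ) + (ω - 1) ∧ (j : ℕ) ≤ (i : ℕ) + (ω - 1))
    (c : Fin n → ℕ) (hc : ∀ i : Fin n, c i = (i : ℕ) % (2 * ω - 1)) :
    (∀ ⦃i j : Fin n⦄, G.Adj i j → c i ≠ c j) ∧
    (∀ i : Fin n, ω - 1 ≤ (i : ℕ) → (i : ℕ) ≤ n - ω →
      ∀ col < 2 * ω - 1, col ≠ c i → ∃ j : Fin n, G.Adj i j ∧ c j = col) := by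
  set m := 2 * ω - 1 with hm
  have hm1 : 1 ≤ m := by omega
  constructor
  · intro i j hij h
    obtain ⟨hne, h1, h2⟩ := (hadj i j).mp hij
    rw [hc, hc] at h
    have hne' : (i : ℕ) ≠ (j : ℕ) := fun e => hne (Fin.ext e)
    rcases Nat.lt_or_ge (i : ℕ) (j : ℕ) with hlt | hge
    · have hd : m ∣ (j : ℕ) - (i : ℕ) := (Nat.modEq_iff_dvd' hlt.le).mp h
      have := Nat.le_of_dvd (by omega) hd
      omega
    · have hd : m ∣ (i : ℕ) - (j : ℕ) := (Nat.modEq_iff_dvd' hge).mp h.symm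
      have := Nat.le_of_dvd (by omega) hd
      omega
  · intro i hi1 hi2 col hcol hcne
    have hin : (i : ℕ) < n := i.isLt
    have hn : ω ≤ n := by
      by_contra hn
      omega
    set a := (i : ℕ) - (ω - 1) with ha
    set t := (m + col - a % m) % m with ht
    have htm : t < m := Nat.mod_lt _ (by omega)
    have hamlt : a % m < m := Nat.mod_lt _ (by omega)
    have hjn : a + t < n := by omega
    have key : (a + t) % m = col := by
      have h1 : (a + t) % m = (a + (m + col - a % m)) % m := by
        rw [ht, Nat.add_mod_mod]
      have h2 : a + (m + col - a % m) = m * (a / m) + (m + col) := by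
        have := Nat.div_add_mod a m
        omega
      rw [h1, h2, Nat.mul_add_mod, Nat.add_mod_left, Nat.mod_eq_of_lt hcol]
    have hne : (i : ℕ) ≠ a + t := by
      intro e
      apply hcne
      rw [hc, e]
      exact key.symm
    refine ⟨⟨a + t, hjn⟩, ?_, ?_⟩
    · rw [hadj]
      refine ⟨?_, ?_, ?_⟩
      · intro h
        exact hne (congrArg Fin.val h)
      · simp only [Fin.val_mk]
        omega
      · simp only [Fin.val_mk]
        omega
    · rw [hc]
      exact key
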